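/- Let q be an odd prime power and let x ∈ 𝔽_q^× be such that −x is a nonsquare in 𝔽_q^×. Then the number of y ∈ 𝔽_q such that 1 + x·y² is a nonzero square in 𝔽_q equals (q+1)/2 if q ≡ 1 (mod 4), and equals (q−1)/2 if q ≡ 3 (mod 4). (In particular, 1 + x·y² is never zero.) -/

import Mathlib

open Finset

theorem stmt_7 (F : Type*) [Field F] [Fintype F] (q : ℕ) (hq : Fintype.card F = q)
    (hodd : Odd q) (x : F) (hx : x ≠ 0) (hns : ¬ IsSquare (-x)) :
    (∀ y : F, 1 + x * y ^ 2 ≠ 0) ∧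
    (q % 4 = 1 →
      Nat.card {y : F | 1 + x * y ^ 2 ≠ 0 ∧ IsSquare (1 + x * y ^ 2)} = (q + 1) / 2) ∧
    (q % 4 = 3 →
      Nat.card {y : F | 1 + x * y ^ 2 ≠ 0 ∧ IsSquare (1 + x * y ^ 2)} = (q - 1) / 2) := by
  classical
  have hF2 : ringChar F ≠ 2 := by
    intro h
    have := FiniteField.even_card_of_char_two h
    rw [hq] at this
    have := Nat.odd_iff.mp hodd
    omega
  set χ := quadraticChar F with hχ
  -- never zero
  have h1 : ∀ y : F, 1 + x * y ^ 2 ≠ 0 := by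
    intro y h
    exact hns ⟨x * y, by linear_combination -x * h⟩
  refine ⟨h1, ?_⟩
  -- the character sum
  have key : ∑ y : F, χ (1 + x * y ^ 2) = χ (-1) := by
    have step1 : ∑ y : F, χ (1 + x * y ^ 2) = ∑ c : F, (χ c + 1) * χ (1 + x * c) := by
      rw [← Finset.sum_fiberwise' univ (fun y : F => y ^ 2) (fun c => χ (1 + x * c))]
      refine Finset.sum_congr rfl fun c _ => ?_
      rw [Finset.sum_const, nsmul_eq_mul]
      congr 1
      have := quadraticChar_card_sqrts hF2 c
      rw [← this]
      congr 1
      apply Finset.card_bij (fun a _ => a)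
      · intro a ha
        simp only [Set.mem_toFinset, Set.mem_setOf_eq]
        simpa using ha
      · intro a _ b _ h; exact h
      · intro b hb
        refine ⟨b, ?_, rfl⟩
        simp only [Set.mem_toFinset, Set.mem_setOf_eq] at hb
        simpa using hb
    have step2 : ∑ c : F, χ (1 + x * c) = 0 := by
      rw [Fintype.sum_equiv ((Equiv.mulLeft₀ x hx).trans (Equiv.addLeft 1))
        (fun c => χ (1 + x * c)) (fun d => χ d) (fun c => by
          simp [Equiv.mulLeft₀, Equiv.addLeft]),
        quadraticChar_sum_zero hF2]
    have step3 : ∑ c : F, χ c * χ (1 + x * c) = - χ x := by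
      have h3a : ∀ c : F, χ c * χ (1 + x * c) = χ (c ^ 2) * χ (c⁻¹ + x) := by
        intro c
        by_cases hc : c = 0
        · simp [hc, MulChar.map_zero]
        · rw [← map_mul, ← map_mul]
          congr 1
          field_simp
      simp_rw [h3a]
      have h3b : ∀ c : F, χ (c ^ 2) * χ (c⁻¹ + x) =
          if c = 0 then 0 else χ (c⁻¹ + x) := by
        intro c
        by_cases hc : c = 0
        · simp [hc, MulChar.map_zero]
        · rw [if_neg hc, quadraticChar_sq_one' hc, one_mul]
      simp_rw [h3b]
      have h4 : (∑ c : F, if c = 0 then 0 else χ (c⁻¹ + x)) =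
          ∑ c : F, if c = 0 then 0 else χ (c + x) := by
        refine Fintype.sum_equiv (Equiv.inv F) _ _ fun c => ?_
        by_cases hc : c = 0 <;> simp [hc]
      have h5 : ∑ c : F, χ (c + x) = 0 := by
        rw [Fintype.sum_equiv (Equiv.addRight x) (fun c => χ (c + x)) (fun d => χ d)
          (fun c => by simp), quadraticChar_sum_zero hF2]
      have h6 : ∑ c : F, χ (c + x) = (∑ c : F, if c = 0 then 0 else χ (c + x)) + χ (0 + x) := by
        have hp : ∀ c : F, χ (c + x) =
            (if c = 0 then 0 else χ (c + x)) + (if c = 0 then χ (c + x) else 0) := by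
          intro c; by_cases hc : c = 0 <;> simp [hc]
        calc ∑ c : F, χ (c + x)
            = ∑ c : F, ((if c = 0 then 0 else χ (c + x)) + (if c = 0 then χ (c + x) else 0)) :=
              Finset.sum_congr rfl fun c _ => hp c
          _ = (∑ c : F, if c = 0 then 0 else χ (c + x)) +
              ∑ c : F, (if c = 0 then χ (c + x) else 0) := Finset.sum_add_distrib
          _ = _ := by rw [Finset.sum_ite_eq' univ (0 : F) (fun c => χ (c + x))]; simp
      rw [h4]
      rw [h5] at h6
      rw [zero_add] at h6
      linarith
    rw [step1]
    simp_rw [add_mul, one_mul]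
    rw [Finset.sum_add_distrib, step2, step3, add_zero]
    have hxval : χ x = - χ (-1) := by
      have hm : χ (-1) * χ (-x) = χ x := by rw [← map_mul]; ring_nf
      rw [quadraticChar_neg_one_iff_not_isSquare.mpr hns] at hm
      linarith
    rw [hxval]; ring
  -- counting
  set T := univ.filter (fun y : F => IsSquare (1 + x * y ^ 2)) with hT
  have hsum : ∑ y : F, χ (1 + x * y ^ 2) = 2 * (T.card : ℤ) - q := by
    rw [← Finset.sum_filter_add_sum_filter_not univ (fun y => IsSquare (1 + x * y ^ 2))]
    have e1 : ∑ y ∈ T, χ (1 + x * y ^ 2) = (T.card : ℤ) := by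
      rw [Finset.sum_congr rfl (fun y hy =>
        (quadraticChar_one_iff_isSquare (h1 y)).mpr (Finset.mem_filter.mp hy).2)]
      simp
      rfl
    have e2 : ∑ y ∈ univ.filter (fun y => ¬ IsSquare (1 + x * y ^ 2)), χ (1 + x * y ^ 2)
        = -((q : ℤ) - T.card) := by
      rw [Finset.sum_congr rfl (fun y hy =>
        quadraticChar_neg_one_iff_not_isSquare.mpr (Finset.mem_filter.mp hy).2)]
      rw [Finset.sum_const, nsmul_eq_mul]
      have hc := Finset.card_filter_add_card_filter_not
        (s := univ) (p := fun y : F => IsSquare (1 + x * y ^ 2))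
      rw [Finset.card_univ, hq, ← hT] at hc
      omega
    rw [e1, e2]; ring
  have hTle : T.card ≤ q := by
    rw [← hq, ← Finset.card_univ]; exact Finset.card_filter_le _ _
  have hcard : Nat.card {y : F | 1 + x * y ^ 2 ≠ 0 ∧ IsSquare (1 + x * y ^ 2)} = T.card := by
    have hset : {y : F | 1 + x * y ^ 2 ≠ 0 ∧ IsSquare (1 + x * y ^ 2)} =
        {y : F | IsSquare (1 + x * y ^ 2)} := by
      ext y; simp [h1 y]
    rw [hset, Nat.card_eq_fintype_card, hT]
    exact Fintype.card_subtype _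
  have hneg1 : χ (-1) = ZMod.χ₄ q := by
    rw [hχ, quadraticChar_neg_one hF2, hq]
  rw [hsum, hneg1] at key
  constructor
  · intro hq1
    have h2 : q % 2 = 1 := Nat.odd_iff.mp hodd
    have : ZMod.χ₄ (q : ZMod 4) = 1 := by
      rw [ZMod.χ₄_nat_eq_if_mod_four, h2, hq1]; norm_num
    rw [this] at key
    rw [hcard]
    omega
  · intro hq3
    have h2 : q % 2 = 1 := Nat.odd_iff.mp hodd
    have : ZMod.χ₄ (q : ZMod 4) = -1 := by
      rw [ZMod.χ₄_nat_eq_if_mod_four, h2, hq3]; norm_num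
    rw [this] at key
    rw [hcard]
    omega
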